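/- Every coordination game with bonuses on a simple directed cycle is coalitionally weakly acyclic: from every initial joint strategy there is a finite coalitional improvement path ending in a strong equilibrium. In particular, every such game has a strong equilibrium. -/

import Mathlib

open Finset

/-- Payoff in a coordination game with bonuses on the simple directed cycle
`1 → 2 → ⋯ → n → 1` (nodes modelled as `Fin n`, with `i - 1` the predecessor
of `i` on the cycle): the bonus of `i` for its colour, plus `1` if `i` chose
the same colour as its predecessor. -/
def cycPayoff {n : ℕ} [NeZero n] {C : Type} [DecidableEq C]
    (β : Fin n → C → ℕ) (s : Fin n → C) (i : Fin n) : ℕ :=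
  β i (s i) + (if s (i - 1) = s i then 1 else 0)

/-- A colouring is valid if every node chooses a colour available to it. -/
def Valid {n : ℕ} {C : Type} (A : Fin n → Finset C) (s : Fin n → C) : Prop :=
  ∀ i, s i ∈ A i

/-- `s'` is a profitable deviation (of the non-empty coalition on which `s`
and `s'` differ) from `s`: every deviating player strictly improves. -/
def ProfDev {n : ℕ} {C : Type} (p : (Fin n → C) → Fin n → ℕ)
    (s s' : Fin n → C) : Prop :=
  s ≠ s' ∧ ∀ i, s i ≠ s' i → p s i < p s' i

/-- A strong equilibrium: no coalition has a profitable deviation. -/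
def StrongEq {n : ℕ} {C : Type} (A : Fin n → Finset C)
    (p : (Fin n → C) → Fin n → ℕ) (s : Fin n → C) : Prop :=
  ∀ s', Valid A s' → ¬ ProfDev p s s'

/-- A Nash equilibrium: no single player can strictly improve unilaterally. -/
def NashEq {n : ℕ} {C : Type} [DecidableEq C] (A : Fin n → Finset C)
    (p : (Fin n → C) → Fin n → ℕ) (s : Fin n → C) : Prop :=
  ∀ i, ∀ c ∈ A i, p (Function.update s i c) i ≤ p s i

/-- A single-player profitable deviation: exactly player `i` changes his
strategy and strictly improves. -/
def SingleStep {n : ℕ} {C : Type} (p : (Fin n → C) → Fin n → ℕ)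
    (s s' : Fin n → C) : Prop :=
  ∃ i, (∀ j, j ≠ i → s j = s' j) ∧ s i ≠ s' i ∧ p s i < p s' i

section CWA
set_option linter.unusedSectionVars false
open scoped Fin.CommRing

variable {n : ℕ} [NeZero n] {C : Type} [DecidableEq C]

/-- Total welfare. -/
def Wsum (β : Fin n → C → ℕ) (s : Fin n → C) : ℕ := ∑ i, cycPayoff β s i

/-- Total bonus. -/
def Bsum (β : Fin n → C → ℕ) (s : Fin n → C) : ℕ := ∑ i, β i (s i)

/-- Nodes resisting colour `c`. -/
def Rset (A : Fin n → Finset C) (β : Fin n → C → ℕ) (s : Fin n → C) (c : C) :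
    Finset (Fin n) :=
  univ.filter (fun f => c ∉ A f ∨ β f c < β f (s f))

def psiAux (S : Finset (Fin n)) (i : Fin n) : ℕ :=
  if h : S.Nonempty then S.inf' h (fun f => (f - i).val) else n

def psi (A : Fin n → Finset C) (β : Fin n → C → ℕ) (s : Fin n → C) (i : Fin n) : ℕ :=
  psiAux (Rset A β s (s (i - 1))) i

def Psi (A : Fin n → Finset C) (β : Fin n → C → ℕ) (s : Fin n → C) : ℕ :=
  ∑ i, if s (i - 1) ≠ s i then psi A β s i + 1 else 0

-- basic Fin facts
lemma fin_one_ne_zero (hn : 2 ≤ n) : (1 : Fin n) ≠ 0 := by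
  intro h
  have h2 := congrArg Fin.val h
  simp only [Fin.val_one', Fin.val_zero] at h2
  rw [Nat.mod_eq_of_lt (by omega)] at h2
  omega

lemma fin_add_one_ne (hn : 2 ≤ n) (i : Fin n) : i + 1 ≠ i := by
  intro h
  have : i + 1 = i + 0 := by simpa using h
  exact fin_one_ne_zero hn (add_left_cancel this)

lemma fin_sub_one_ne (hn : 2 ≤ n) (i : Fin n) : i - 1 ≠ i := by
  intro h
  have : i = i + 1 := by
    have := congrArg (· + 1) h
    simpa using this.symm
  exact fin_add_one_ne hn i this.symm

lemma fin_sub_eq_iff (i j : Fin n) : j - 1 = i ↔ j = i + 1 := by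
  constructor
  · intro h; rw [← h]; ring
  · intro h; rw [h]; ring

lemma psi_le (S : Finset (Fin n)) (i : Fin n) : psiAux S i ≤ n := by
  unfold psiAux
  split
  · next h =>
    obtain ⟨f, hf⟩ := h
    exact le_trans (Finset.inf'_le _ hf) (le_of_lt (f - i).isLt)
  · exact le_refl n

lemma Psi_le (A : Fin n → Finset C) (β : Fin n → C → ℕ) (s : Fin n → C) :
    Psi A β s ≤ n * (n + 1) := by
  unfold Psi
  calc ∑ i : Fin n, (if s (i - 1) ≠ s i then psi A β s i + 1 else 0)
      ≤ ∑ _i : Fin n, (n + 1) := by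
        apply Finset.sum_le_sum
        intro i _
        split
        · exact Nat.add_le_add_right (psi_le _ _) 1
        · omega
    _ = n * (n + 1) := by simp [Finset.sum_const, mul_comm]


variable {A : Fin n → Finset C} {β : Fin n → C → ℕ}

lemma pay_congr {s t : Fin n → C} {j : Fin n} (h1 : s j = t j)
    (h2 : s (j - 1) = t (j - 1)) : cycPayoff β s j = cycPayoff β t j := by
  simp [cycPayoff, h1, h2]

lemma pay_update_ne {s : Fin n → C} {i : Fin n} {c : C} {j : Fin n}
    (hj : j ≠ i) (hj2 : j ≠ i + 1) :
    cycPayoff β (Function.update s i c) j = cycPayoff β s j := by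
  apply pay_congr
  · exact Function.update_of_ne hj _ _
  · exact Function.update_of_ne (fun hh => hj2 ((fin_sub_eq_iff i j).mp hh)) _ _

lemma sum_pair_decomp (hn : 2 ≤ n) (g : Fin n → ℕ) (i : Fin n) :
    ∑ j, g j = g i + g (i + 1) + ∑ j ∈ univ \ {i, i + 1}, g j := by
  rw [← Finset.sum_sdiff (subset_univ ({i, i + 1} : Finset (Fin n))),
    Finset.sum_pair (fin_add_one_ne hn i).symm]
  ring

lemma Wsum_update (hn : 2 ≤ n) (s : Fin n → C) (i : Fin n) (c : C) :
    Wsum β (Function.update s i c) + cycPayoff β s i + cycPayoff β s (i + 1)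
      = Wsum β s + cycPayoff β (Function.update s i c) i
        + cycPayoff β (Function.update s i c) (i + 1) := by
  unfold Wsum
  rw [sum_pair_decomp hn (cycPayoff β (Function.update s i c)) i,
    sum_pair_decomp hn (cycPayoff β s) i]
  have hcg : ∑ j ∈ univ \ {i, i + 1}, cycPayoff β (Function.update s i c) j
      = ∑ j ∈ univ \ {i, i + 1}, cycPayoff β s j := by
    apply Finset.sum_congr rfl
    intro j hj
    simp only [Finset.mem_sdiff, Finset.mem_insert, Finset.mem_singleton] at hj
    exact pay_update_ne (by tauto) (by tauto)
  rw [hcg]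
  ring

lemma Bsum_update (s : Fin n → C) (i : Fin n) (c : C) :
    Bsum β (Function.update s i c) + β i (s i) = Bsum β s + β i c := by
  unfold Bsum
  rw [← Finset.add_sum_erase univ (fun j => β j (Function.update s i c j)) (mem_univ i),
    ← Finset.add_sum_erase univ (fun j => β j (s j)) (mem_univ i)]
  have hcg : ∑ j ∈ univ.erase i, β j (Function.update s i c j)
      = ∑ j ∈ univ.erase i, β j (s j) := by
    apply Finset.sum_congr rfl
    intro j hj
    rw [Function.update_of_ne (Finset.ne_of_mem_erase hj)]
  rw [hcg, Function.update_self]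
  ring

lemma Bsum_mono {s s' : Fin n → C} (h : ProfDev (cycPayoff β) s s') :
    Bsum β s ≤ Bsum β s' := by
  unfold Bsum
  apply Finset.sum_le_sum
  intro i _
  by_cases hi : s i = s' i
  · rw [hi]
  · have h2 := h.2 i hi
    unfold cycPayoff at h2
    split_ifs at h2 <;> omega

lemma Wsum_mono (hn : 2 ≤ n) {s s' : Fin n → C} (h : ProfDev (cycPayoff β) s s') :
    Wsum β s ≤ Wsum β s' := by
  classical
  have key : (0 : ℤ) ≤ ∑ i, ((cycPayoff β s' i : ℤ) - cycPayoff β s i) := by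
    rw [← Finset.sum_filter_add_sum_filter_not univ (fun i => ¬ (s i = s' i))]
    have h1 : ((univ.filter (fun i => ¬ (s i = s' i))).card : ℤ)
        ≤ ∑ i ∈ univ.filter (fun i => ¬ (s i = s' i)),
            ((cycPayoff β s' i : ℤ) - cycPayoff β s i) := by
      calc ((univ.filter (fun i => ¬ (s i = s' i))).card : ℤ)
          = ∑ _i ∈ univ.filter (fun i => ¬ (s i = s' i)), (1 : ℤ) := by simp
        _ ≤ _ := by
          apply Finset.sum_le_sum
          intro i hi
          have hne : ¬ (s i = s' i) := (Finset.mem_filter.mp hi).2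
          have h5 := h.2 i hne
          have h6 : (cycPayoff β s i : ℤ) < cycPayoff β s' i := by exact_mod_cast h5
          omega
    have h2 : -(((univ.filter (fun i => ¬ (s i = s' i))).card : ℤ))
        ≤ ∑ i ∈ univ.filter (fun i => ¬ ¬ (s i = s' i)),
            ((cycPayoff β s' i : ℤ) - cycPayoff β s i) := by
      have hlb : ∀ i ∈ univ.filter (fun i => ¬ ¬ (s i = s' i)),
          -(if i - 1 ∈ univ.filter (fun i => ¬ (s i = s' i)) then (1 : ℤ) else 0)
            ≤ (cycPayoff β s' i : ℤ) - cycPayoff β s i := by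
        intro i hi
        have heq : s i = s' i := not_not.mp (Finset.mem_filter.mp hi).2
        by_cases hp : i - 1 ∈ univ.filter (fun i => ¬ (s i = s' i))
        · simp only [hp, if_true]
          unfold cycPayoff
          rw [heq]
          push_cast
          split_ifs <;> omega
        · simp only [hp, if_false]
          have hpe : s (i - 1) = s' (i - 1) := by
            by_contra hc
            exact hp (by simp [hc])
          unfold cycPayoff
          rw [heq, hpe]
          simp
      have h3 := Finset.sum_le_sum hlb
      refine le_trans ?_ h3
      have e1 : (∑ i ∈ univ.filter (fun i => ¬ ¬ (s i = s' i)),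
          -(if i - 1 ∈ univ.filter (fun i => ¬ (s i = s' i)) then (1 : ℤ) else 0))
          = -(∑ i ∈ univ.filter (fun i => ¬ ¬ (s i = s' i)),
              (if i - 1 ∈ univ.filter (fun i => ¬ (s i = s' i)) then (1 : ℤ) else 0)) := by
        rw [Finset.sum_neg_distrib]
      rw [e1]
      apply neg_le_neg
      have e2 : (∑ i ∈ univ.filter (fun i => ¬ ¬ (s i = s' i)),
          (if i - 1 ∈ univ.filter (fun i => ¬ (s i = s' i)) then (1 : ℤ) else 0))
          ≤ ∑ i,
          (if i - 1 ∈ univ.filter (fun i => ¬ (s i = s' i)) then (1 : ℤ) else 0) := by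
        apply Finset.sum_le_sum_of_subset_of_nonneg (Finset.filter_subset _ _)
        intro i _ _
        split_ifs <;> simp
      refine le_trans e2 ?_
      have e3 : (∑ i : Fin n,
          (if i - 1 ∈ univ.filter (fun i => ¬ (s i = s' i)) then (1 : ℤ) else 0))
          = ((univ.filter (fun i => i - 1 ∈ univ.filter (fun j => ¬ (s j = s' j)))).card : ℤ) := by
        rw [Finset.sum_boole]
      rw [e3]
      have e4 : univ.filter (fun i => i - 1 ∈ univ.filter (fun j => ¬ (s j = s' j)))
          = (univ.filter (fun j => ¬ (s j = s' j))).image (· + 1) := by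
        ext x
        simp only [Finset.mem_filter, Finset.mem_image, Finset.mem_univ, true_and]
        constructor
        · intro hx
          exact ⟨x - 1, hx, by ring⟩
        · rintro ⟨a, ha, rfl⟩
          simpa using ha
      rw [e4, Finset.card_image_of_injective _ (add_left_injective 1)]
    have h4 := add_le_add h1 h2
    linarith
  have h7 : (Wsum β s : ℤ) ≤ (Wsum β s' : ℤ) := by
    unfold Wsum
    push_cast
    rw [Finset.sum_sub_distrib] at key
    linarith
  exact_mod_cast h7


lemma fin_sub_one_val {x : Fin n} (hx : x ≠ 0) : (x - 1).val = x.val - 1 := by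
  obtain ⟨m, rfl⟩ : ∃ m, n = m + 1 := ⟨n - 1, by have := NeZero.pos n; omega⟩
  rw [Fin.coe_sub_one, if_neg hx]

lemma valid_update {s : Fin n → C} (hs : Valid A s) {i : Fin n} {c : C} (hc : c ∈ A i) :
    Valid A (Function.update s i c) := by
  intro j
  by_cases hj : j = i
  · subst hj; rw [Function.update_self]; exact hc
  · rw [Function.update_of_ne hj]; exact hs j

lemma pay_update_self (hn : 2 ≤ n) {s : Fin n → C} {i : Fin n} {c : C}
    (h1 : s (i - 1) = c) :
    cycPayoff β (Function.update s i c) i = β i c + 1 := by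
  unfold cycPayoff
  rw [Function.update_self, Function.update_of_ne (fin_sub_one_ne hn i), h1, if_pos rfl]

lemma grab_profdev (hn : 2 ≤ n) {s : Fin n → C} {i : Fin n} {c : C}
    (h1 : s (i - 1) = c) (h2 : c ≠ s i) (h3 : β i (s i) ≤ β i c) :
    ProfDev (cycPayoff β) s (Function.update s i c) := by
  constructor
  · intro he
    have := congrFun he i
    rw [Function.update_self] at this
    exact h2 this.symm
  · intro j hj
    have hji : j = i := by
      by_contra hji
      rw [Function.update_of_ne hji] at hj
      exact hj rfl
    subst hji
    rw [pay_update_self hn h1]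
    unfold cycPayoff
    rw [h1, if_neg h2]
    omega

lemma flat_grab_struct (hn : 2 ≤ n) {s : Fin n → C} {i : Fin n} {c : C} (h2 : c ≠ s i)
    (himp : cycPayoff β s i < cycPayoff β (Function.update s i c) i)
    (hW : Wsum β (Function.update s i c) = Wsum β s)
    (hB : Bsum β (Function.update s i c) = Bsum β s) :
    s (i - 1) = c ∧ s (i + 1) = s i ∧ c ≠ s (i + 1) ∧ β i c = β i (s i) := by
  have hβ : β i c = β i (s i) := by
    have := Bsum_update (β := β) s i c
    omega
  have hpred : s (i - 1) = c ∧ ¬ (s (i - 1) = s i) := by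
    unfold cycPayoff at himp
    rw [Function.update_self, Function.update_of_ne (fin_sub_one_ne hn i), hβ] at himp
    constructor
    · by_contra hc
      rw [if_neg hc] at himp
      split_ifs at himp <;> omega
    · intro hc
      rw [if_pos hc] at himp
      split_ifs at himp <;> omega
  have hWp := Wsum_update hn (β := β) s i c
  rw [hW] at hWp
  have hpi : cycPayoff β (Function.update s i c) i = cycPayoff β s i + 1 := by
    rw [pay_update_self hn hpred.1]
    unfold cycPayoff
    rw [if_neg hpred.2, hβ]
  have hnext : cycPayoff β s (i + 1)
      = cycPayoff β (Function.update s i c) (i + 1) + 1 := by omega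
  have hpay1 : cycPayoff β (Function.update s i c) (i + 1)
      = β (i + 1) (s (i + 1)) + (if c = s (i + 1) then 1 else 0) := by
    unfold cycPayoff
    rw [Function.update_of_ne (fin_add_one_ne hn i)]
    congr 2
    have he : i + 1 - 1 = i := by ring
    rw [he, Function.update_self]
  have hpay2 : cycPayoff β s (i + 1)
      = β (i + 1) (s (i + 1)) + (if s i = s (i + 1) then 1 else 0) := by
    unfold cycPayoff
    congr 2
    have he : i + 1 - 1 = i := by ring
    rw [he]
  rw [hpay1, hpay2] at hnext
  have h6 : s i = s (i + 1) ∧ ¬ (c = s (i + 1)) := by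
    constructor
    · by_contra hc
      rw [if_neg hc] at hnext
      split_ifs at hnext <;> omega
    · intro hc
      rw [if_pos hc] at hnext
      split_ifs at hnext <;> omega
  exact ⟨hpred.1, h6.1.symm, h6.2, hβ⟩

lemma exists_boundary {s s' : Fin n → C} (a b : Fin n) (ha : ¬ (s a = s' a))
    (hb : s b = s' b) :
    ∃ i, ¬ (s i = s' i) ∧ s (i - 1) = s' (i - 1) := by
  classical
  have hex : ∃ k : ℕ, s (a - (k : Fin n)) = s' (a - (k : Fin n)) := by
    refine ⟨(a - b).val, ?_⟩
    rw [Fin.cast_val_eq_self, sub_sub_cancel]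
    exact hb
  set m := Nat.find hex with hmdef
  have hm := Nat.find_spec hex
  have hm0 : m ≠ 0 := by
    intro h0
    rw [← hmdef, h0] at hm
    simp at hm
    exact ha hm
  have hlt : ¬ s (a - ((m - 1 : ℕ) : Fin n)) = s' (a - ((m - 1 : ℕ) : Fin n)) :=
    Nat.find_min hex (by omega)
  refine ⟨a - ((m - 1 : ℕ) : Fin n), hlt, ?_⟩
  have hcast : ((m - 1 : ℕ) : Fin n) + 1 = ((m : ℕ) : Fin n) := by
    have : ((m - 1 : ℕ) + 1 : ℕ) = m := by omega
    rw [← this]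
    push_cast
    ring
  have he : a - ((m - 1 : ℕ) : Fin n) - 1 = a - ((m : ℕ) : Fin n) := by
    rw [← hcast]
    ring
  rw [he]
  exact hm


lemma Rset_update {s : Fin n → C} {i : Fin n} {c : C} (hβ : β i c = β i (s i)) (p : C) :
    Rset A β (Function.update s i c) p = Rset A β s p := by
  unfold Rset
  apply Finset.filter_congr
  intro f _
  by_cases hf : f = i
  · subst hf
    rw [Function.update_self, hβ]
  · rw [Function.update_of_ne hf]

lemma fin_val_pos {x : Fin n} (hx : x ≠ 0) : 1 ≤ x.val := by
  rcases Nat.eq_zero_or_pos x.val with h | h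
  · exact absurd (Fin.ext (by simp [h])) hx
  · exact h

lemma psiAux_shift (hn : 2 ≤ n) {R : Finset (Fin n)} (hR : R.Nonempty) {i : Fin n}
    (hi : i ∉ R) : psiAux R (i + 1) + 1 = psiAux R i := by
  have hne : ∀ f ∈ R, f - i ≠ 0 := by
    intro f hf he
    exact hi ((sub_eq_zero.mp he) ▸ hf)
  have hshift : ∀ f ∈ R, (f - (i + 1)).val = (f - i).val - 1 := by
    intro f hf
    have h1 : f - (i + 1) = (f - i) - 1 := by ring
    rw [h1, fin_sub_one_val (hne f hf)]
  have hpos : ∀ f ∈ R, 1 ≤ (f - i).val := fun f hf => fin_val_pos (hne f hf)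
  unfold psiAux
  rw [dif_pos hR, dif_pos hR]
  apply le_antisymm
  · obtain ⟨f0, hf0, hmin⟩ := Finset.exists_mem_eq_inf' hR (fun f => (f - i).val)
    have hle := Finset.inf'_le (fun f => (f - (i + 1)).val) hf0
    rw [hshift f0 hf0] at hle
    have := hpos f0 hf0
    rw [hmin]
    omega
  · obtain ⟨f1, hf1, hmin⟩ := Finset.exists_mem_eq_inf' hR (fun f => (f - (i + 1)).val)
    have hle := Finset.inf'_le (fun f => (f - i).val) hf1
    rw [hmin, hshift f1 hf1]
    have := hpos f1 hf1
    omega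

/-- The key decrement: a flat grab strictly decreases `Psi` (by exactly one). -/
lemma Psi_dec (hn : 2 ≤ n) {s : Fin n → C} {i : Fin n} {c : C}
    (hmem : c ∈ A i) (hβ : β i c = β i (s i))
    (h1 : s (i - 1) = c) (h2 : c ≠ s i) (h3 : s (i + 1) = s i)
    (hR : (Rset A β s c).Nonempty) :
    Psi A β (Function.update s i c) + 1 = Psi A β s := by
  classical
  have hii1 : i + 1 ≠ i := fin_add_one_ne hn i
  have hi1i : i - 1 ≠ i := fin_sub_one_ne hn i
  have he : i + 1 - 1 = i := by ring
  have hiR : i ∉ Rset A β s c := by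
    unfold Rset
    simp only [Finset.mem_filter, Finset.mem_univ, true_and]
    push_neg
    exact ⟨hmem, by omega⟩
  have hterm : ∀ j, j ≠ i → j ≠ i + 1 →
      (if Function.update s i c (j - 1) ≠ Function.update s i c j
          then psi A β (Function.update s i c) j + 1 else 0)
        = (if s (j - 1) ≠ s j then psi A β s j + 1 else 0) := by
    intro j hj hj2
    have hj1 : j - 1 ≠ i := fun hh => hj2 ((fin_sub_eq_iff i j).mp hh)
    have e1 : Function.update s i c j = s j := Function.update_of_ne hj _ _
    have e2 : Function.update s i c (j - 1) = s (j - 1) := Function.update_of_ne hj1 _ _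
    have e3 : psi A β (Function.update s i c) j = psi A β s j := by
      unfold psi
      rw [e2, Rset_update hβ]
    rw [e1, e2, e3]
  have hti : (if s (i - 1) ≠ s i then psi A β s i + 1 else 0) = psi A β s i + 1 :=
    if_pos (by rw [h1]; exact h2)
  have hti2 : (if Function.update s i c (i - 1) ≠ Function.update s i c i
      then psi A β (Function.update s i c) i + 1 else 0) = 0 := by
    rw [if_neg]
    push_neg
    rw [Function.update_self, Function.update_of_ne hi1i, h1]
  have hti3 : (if s (i + 1 - 1) ≠ s (i + 1) then psi A β s (i + 1) + 1 else 0) = 0 := by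
    rw [if_neg]
    push_neg
    rw [he, h3]
  have hpsi2 : psi A β (Function.update s i c) (i + 1) + 1 = psi A β s i := by
    unfold psi
    rw [he, Function.update_self, Rset_update hβ, h1]
    exact psiAux_shift hn hR hiR
  have hcond : Function.update s i c (i + 1 - 1) ≠ Function.update s i c (i + 1) := by
    rw [he, Function.update_self, Function.update_of_ne hii1, h3]
    exact h2
  have hti4 : (if Function.update s i c (i + 1 - 1) ≠ Function.update s i c (i + 1)
      then psi A β (Function.update s i c) (i + 1) + 1 else 0)
      = psi A β (Function.update s i c) (i + 1) + 1 := if_pos hcond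
  unfold Psi
  rw [sum_pair_decomp hn (fun j => if Function.update s i c (j - 1) ≠ Function.update s i c j
      then psi A β (Function.update s i c) j + 1 else 0) i,
    sum_pair_decomp hn (fun j => if s (j - 1) ≠ s j then psi A β s j + 1 else 0) i]
  have hdiff : ∑ j ∈ univ \ {i, i + 1}, (if Function.update s i c (j - 1) ≠ Function.update s i c j
      then psi A β (Function.update s i c) j + 1 else 0)
      = ∑ j ∈ univ \ {i, i + 1}, (if s (j - 1) ≠ s j then psi A β s j + 1 else 0) := by
    apply Finset.sum_congr rfl
    intro j hj
    simp only [Finset.mem_sdiff, Finset.mem_insert, Finset.mem_singleton] at hj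
    exact hterm j (by tauto) (by tauto)
  rw [hdiff, hti2, hti4, hti, hti3]
  omega


def Wb (A : Fin n → Finset C) (β : Fin n → C → ℕ) : ℕ := ∑ i, ((A i).sup (β i) + 1)

def Bb (A : Fin n → Finset C) (β : Fin n → C → ℕ) : ℕ := ∑ i, (A i).sup (β i)

lemma Bsum_le {s : Fin n → C} (hs : Valid A s) : Bsum β s ≤ Bb A β :=
  Finset.sum_le_sum fun i _ => Finset.le_sup (f := β i) (hs i)

lemma Wsum_le {s : Fin n → C} (hs : Valid A s) : Wsum β s ≤ Wb A β := by
  apply Finset.sum_le_sum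
  intro i _
  unfold cycPayoff
  have := Finset.le_sup (f := β i) (hs i)
  split_ifs <;> omega

def muv (A : Fin n → Finset C) (β : Fin n → C → ℕ) (s : Fin n → C) : ℕ :=
  (Wb A β - Wsum β s) * (Bb A β + 1) + (Bb A β - Bsum β s)

def meas (A : Fin n → Finset C) (β : Fin n → C → ℕ) (s : Fin n → C) : ℕ :=
  muv A β s * (n * (n + 1) + 1) + Psi A β s

lemma muv_lt {s s' : Fin n → C} (hs : Valid A s) (hs' : Valid A s')
    (hW : Wsum β s ≤ Wsum β s') (hB : Bsum β s ≤ Bsum β s')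
    (hstrict : Wsum β s < Wsum β s' ∨ Bsum β s < Bsum β s') :
    muv A β s' < muv A β s := by
  have hW1 := Wsum_le (β := β) hs
  have hW2 := Wsum_le (β := β) hs'
  have hB1 := Bsum_le (β := β) hs
  have hB2 := Bsum_le (β := β) hs'
  unfold muv
  by_cases hWs : Wsum β s < Wsum β s'
  · have h1 : Wb A β - Wsum β s' + 1 ≤ Wb A β - Wsum β s := by omega
    have h2 : (Wb A β - Wsum β s' + 1) * (Bb A β + 1)
        ≤ (Wb A β - Wsum β s) * (Bb A β + 1) := Nat.mul_le_mul_right _ h1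
    have h3 : (Wb A β - Wsum β s' + 1) * (Bb A β + 1)
        = (Wb A β - Wsum β s') * (Bb A β + 1) + (Bb A β + 1) := by ring
    omega
  · have hWeq : Wsum β s' = Wsum β s := by omega
    rw [hWeq]
    have : Bsum β s < Bsum β s' := by tauto
    omega

lemma meas_lt_aux {a a' p p' K : ℕ} (h : a' < a) (hp : p' < K) :
    a' * K + p' < a * K + p := by
  have h2 : (a' + 1) * K ≤ a * K := Nat.mul_le_mul_right _ h
  have h3 : (a' + 1) * K = a' * K + K := by ring
  omega

lemma meas_lt {s s' : Fin n → C} (h : muv A β s' < muv A β s) :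
    meas A β s' < meas A β s := by
  unfold meas
  exact meas_lt_aux h (by have := Psi_le A β s'; omega)

/-- Growing an unresisted colour. -/
lemma grow (hn : 2 ≤ n) (c : C) :
    ∀ k (s : Fin n → C), Valid A s →
    (∀ f, c ∈ A f ∧ β f (s f) ≤ β f c) →
    (∃ f, s (f - 1) = c ∧ s f ≠ c) →
    n - (univ.filter (fun j => s j = c)).card ≤ k →
    ∃ t, Relation.ReflTransGen
        (fun u v => Valid A v ∧ ProfDev (cycPayoff β) u v) s t ∧ Valid A t ∧
      Wsum β s ≤ Wsum β t ∧ Bsum β s ≤ Bsum β t ∧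
      (Wsum β s < Wsum β t ∨ Bsum β s < Bsum β t) := by
  intro k
  induction k with
  | zero =>
    intro s hs hun hbd hk
    exfalso
    obtain ⟨f, hf1, hf2⟩ := hbd
    have hsub : univ.filter (fun j => s j = c) ⊆ univ.erase f := by
      intro j hj
      rw [Finset.mem_erase]
      refine ⟨?_, mem_univ j⟩
      intro hjf
      subst hjf
      exact hf2 (Finset.mem_filter.mp hj).2
    have hcard := Finset.card_le_card hsub
    rw [Finset.card_erase_of_mem (mem_univ f), Finset.card_univ, Fintype.card_fin] at hcard
    omega
  | succ k IH =>
    intro s hs hun hbd hk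
    obtain ⟨f, hf1, hf2⟩ := hbd
    have hgrab := grab_profdev hn (β := β) hf1 (Ne.symm hf2) (hun f).2
    have hval₂ : Valid A (Function.update s f c) := valid_update hs (hun f).1
    have hW := Wsum_mono hn hgrab
    have hB := Bsum_mono hgrab
    by_cases hstrict : Wsum β s < Wsum β (Function.update s f c)
        ∨ Bsum β s < Bsum β (Function.update s f c)
    · exact ⟨Function.update s f c, Relation.ReflTransGen.single ⟨hval₂, hgrab⟩,
        hval₂, hW, hB, hstrict⟩
    · push_neg at hstrict
      have hWeq : Wsum β (Function.update s f c) = Wsum β s := by omega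
      have hBeq : Bsum β (Function.update s f c) = Bsum β s := by omega
      have himp : cycPayoff β s f < cycPayoff β (Function.update s f c) f := by
        apply hgrab.2
        rw [Function.update_self]
        exact hf2
      obtain ⟨_, hnext, hcnext, _⟩ := flat_grab_struct hn (Ne.symm hf2) himp hWeq hBeq
      have hun₂ : ∀ g, c ∈ A g ∧ β g (Function.update s f c g) ≤ β g c := by
        intro g
        refine ⟨(hun g).1, ?_⟩
        by_cases hg : g = f
        · subst hg; rw [Function.update_self]
        · rw [Function.update_of_ne hg]; exact (hun g).2
      have hbd₂ : ∃ g, Function.update s f c (g - 1) = c ∧ Function.update s f c g ≠ c := by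
        refine ⟨f + 1, ?_, ?_⟩
        · have he : f + 1 - 1 = f := by ring
          rw [he, Function.update_self]
        · rw [Function.update_of_ne (fin_add_one_ne hn f)]
          rw [hnext]
          exact hf2
      have hcount : univ.filter (fun j => Function.update s f c j = c)
          = insert f (univ.filter (fun j => s j = c)) := by
        ext j
        simp only [Finset.mem_filter, Finset.mem_univ, true_and, Finset.mem_insert]
        by_cases hj : j = f
        · subst hj; rw [Function.update_self]; tauto
        · rw [Function.update_of_ne hj]; tauto
      have hfnot : f ∉ univ.filter (fun j => s j = c) := by
        simp only [Finset.mem_filter, Finset.mem_univ, true_and]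
        exact hf2
      have hk₂ : n - (univ.filter (fun j => Function.update s f c j = c)).card ≤ k := by
        rw [hcount, Finset.card_insert_of_notMem hfnot]
        omega
      obtain ⟨t, hpath, hvt, hW2, hB2, hstr2⟩ := IH (Function.update s f c) hval₂ hun₂ hbd₂ hk₂
      refine ⟨t, Relation.ReflTransGen.head ⟨hval₂, hgrab⟩ hpath, hvt, ?_, ?_, ?_⟩
      · omega
      · omega
      · omega

/-- Main lemma: bounded-measure induction. -/
lemma main_lemma (hn : 2 ≤ n) (A : Fin n → Finset C) (β : Fin n → C → ℕ) :
    ∀ N (s : Fin n → C), Valid A s → meas A β s ≤ N →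
    ∃ t, Relation.ReflTransGen
        (fun u v => Valid A v ∧ ProfDev (cycPayoff β) u v) s t ∧
      StrongEq A (cycPayoff β) t := by
  intro N
  induction N using Nat.strong_induction_on with
  | _ N IH =>
  intro s hs hm
  by_cases hstrong : StrongEq A (cycPayoff β) s
  · exact ⟨s, Relation.ReflTransGen.refl, hstrong⟩
  obtain ⟨s', hs', hdev⟩ : ∃ s', Valid A s' ∧ ProfDev (cycPayoff β) s s' := by
    unfold StrongEq at hstrong
    push_neg at hstrong
    exact hstrong
  by_cases hprog : ∃ u, Valid A u ∧ ProfDev (cycPayoff β) s u ∧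
      (Wsum β s < Wsum β u ∨ Bsum β s < Bsum β u)
  · obtain ⟨u, hu, hdu, hsu⟩ := hprog
    have hmu : muv A β u < muv A β s :=
      muv_lt hs hu (Wsum_mono hn hdu) (Bsum_mono hdu) hsu
    have hml : meas A β u < meas A β s := meas_lt hmu
    obtain ⟨t, hp, hstr⟩ := IH (meas A β u) (lt_of_lt_of_le hml hm) u hu le_rfl
    exact ⟨t, Relation.ReflTransGen.head ⟨hu, hdu⟩ hp, hstr⟩
  · push_neg at hprog
    have hflat : ∀ u, Valid A u → ProfDev (cycPayoff β) s u →
        Wsum β u = Wsum β s ∧ Bsum β u = Bsum β s := by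
      intro u hu hd
      have h1 := Wsum_mono hn hd
      have h2 := Bsum_mono hd
      have h3 := hprog u hu hd
      constructor <;> omega
    have hKne : ∃ j, s j = s' j := by
      by_contra hall
      push_neg at hall
      have hlt : Wsum β s < Wsum β s' := by
        unfold Wsum
        apply Finset.sum_lt_sum_of_nonempty univ_nonempty
        intro i _
        exact hdev.2 i (hall i)
      have := (hflat s' hs' hdev).1
      omega
    obtain ⟨j0, hj0⟩ := hKne
    obtain ⟨a0, ha0⟩ : ∃ a, ¬ (s a = s' a) := by
      by_contra hall
      push_neg at hall
      exact hdev.1 (funext hall)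
    obtain ⟨i, hi, hipred⟩ := exists_boundary a0 j0 ha0 hj0
    have hci : s' i ∈ A i := hs' i
    have hpay : cycPayoff β (Function.update s i (s' i)) i = cycPayoff β s' i := by
      apply pay_congr
      · rw [Function.update_self]
      · rw [Function.update_of_ne (fin_sub_one_ne hn i)]
        exact hipred
    have himp : cycPayoff β s i < cycPayoff β (Function.update s i (s' i)) i := by
      rw [hpay]
      exact hdev.2 i hi
    have hvalid₂ : Valid A (Function.update s i (s' i)) := valid_update hs hci
    have hprof₂ : ProfDev (cycPayoff β) s (Function.update s i (s' i)) := by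
      constructor
      · intro he
        have := congrFun he i
        rw [Function.update_self] at this
        exact hi this
      · intro j hj
        have hji : j = i := by
          by_contra hji
          rw [Function.update_of_ne hji] at hj
          exact hj rfl
        subst hji
        exact himp
    have hflat₂ := hflat _ hvalid₂ hprof₂
    obtain ⟨hpred, hnext, hcnext, hβeq⟩ :=
      flat_grab_struct hn (fun hh => hi hh.symm) himp hflat₂.1 hflat₂.2
    by_cases hRne : (Rset A β s (s' i)).Nonempty
    · have hPsi := Psi_dec hn hci hβeq hpred (fun hh => hi hh.symm) hnext hRne
      have hml : meas A β (Function.update s i (s' i)) < meas A β s := by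
        unfold meas muv
        rw [hflat₂.1, hflat₂.2]
        omega
      obtain ⟨t, hp, hstr⟩ := IH (meas A β (Function.update s i (s' i)))
        (lt_of_lt_of_le hml hm) _ hvalid₂ le_rfl
      exact ⟨t, Relation.ReflTransGen.head ⟨hvalid₂, hprof₂⟩ hp, hstr⟩
    · have hunres : ∀ f, s' i ∈ A f ∧ β f (s f) ≤ β f (s' i) := by
        intro f
        rw [Finset.not_nonempty_iff_eq_empty] at hRne
        have hf : f ∉ Rset A β s (s' i) := by rw [hRne]; exact Finset.notMem_empty f
        unfold Rset at hf
        simp only [Finset.mem_filter, Finset.mem_univ, true_and] at hf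
        push_neg at hf
        exact ⟨hf.1, by omega⟩
      obtain ⟨t1, hpath1, hval1, hW1, hB1, hstrict1⟩ :=
        grow hn (s' i) n s hs hunres ⟨i, hpred, fun hh => hi hh⟩ (by omega)
      have hmu : muv A β t1 < muv A β s := muv_lt hs hval1 hW1 hB1 hstrict1
      have hml : meas A β t1 < meas A β s := meas_lt hmu
      obtain ⟨t, hp, hstr⟩ := IH (meas A β t1) (lt_of_lt_of_le hml hm) t1 hval1 le_rfl
      exact ⟨t, Relation.ReflTransGen.trans hpath1 hp, hstr⟩

end CWA

/-- Every coordination game with bonuses on a simple directed cycle is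
coalitionally weakly acyclic: from every initial valid colouring there is a
finite coalitional improvement path (each step a profitable deviation of some
coalition, through valid colourings) ending in a strong equilibrium. In
particular, every such game has a strong equilibrium. -/
theorem cycle_c_weakly_acyclic {n : ℕ} [NeZero n] (hn : 2 ≤ n)
    {C : Type} [DecidableEq C]
    (A : Fin n → Finset C) (hA : ∀ i, (A i).Nonempty)
    (β : Fin n → C → ℕ)
    (s : Fin n → C) (hs : Valid A s) :
    ∃ t, Relation.ReflTransGen
        (fun u v => Valid A v ∧ ProfDev (cycPayoff β) u v) s t ∧
      StrongEq A (cycPayoff β) t :=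
  main_lemma hn A β (meas A β s) s hs le_rfl
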